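/- Let R be a Dedekind domain, p a maximal ideal of R, and M an R-module. Then Ext¹_R(E(R/p), M) = 0 whenever Ext¹_R(R/p, M) = 0, where E(R/p) is the injective hull of R/p; more precisely, the class {M : Ext¹_R(R/p, M) = 0} equals {M : Mp = M}. -/

import Mathlib

universe u

/-- `Ext¹_R(A, B) = 0`: every short exact sequence `0 → B → E → A → 0` splits. -/
def Ext1Zero (R : Type u) [Ring R] (A B : Type u)
    [AddCommGroup A] [Module R A] [AddCommGroup B] [Module R B] : Prop :=
  ∀ (E : Type u) [AddCommGroup E] [Module R E] (ι : B →ₗ[R] E) (π : E →ₗ[R] A),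
    Function.Injective ι → Function.Surjective π →
      LinearMap.range ι = LinearMap.ker π →
        ∃ s : A →ₗ[R] E, π ∘ₗ s = LinearMap.id

set_option linter.unusedSectionVars false
set_option linter.unusedVariables false
set_option maxHeartbeats 1000000

section Aux

variable {R : Type u} [CommRing R] [IsDedekindDomain R]
variable {M : Type u} [AddCommGroup M] [Module R M]

lemma smul_rep_lemma (q : Ideal R) (β : FractionRing R)
    (hβ : ∀ c ∈ q, ∃ s : R, algebraMap R (FractionRing R) s = β * algebraMap R (FractionRing R) c)
    (u : M) (hu : u ∈ q • (⊤ : Submodule R M)) :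
    ∃ m : M, ∀ x ∈ q, ∀ s : R,
      algebraMap R (FractionRing R) s = β * algebraMap R (FractionRing R) x → s • u = x • m := by
  refine Submodule.smul_induction_on hu ?_ ?_
  · intro r hr n _
    obtain ⟨t, ht⟩ := hβ r hr
    refine ⟨t • n, fun x hx s hs => ?_⟩
    have hst : s * r = x * t := by
      apply IsFractionRing.injective R (FractionRing R)
      rw [map_mul, map_mul, hs, ht]; ring
    rw [smul_smul, smul_smul, hst]
  · rintro u₁ u₂ ⟨m₁, h₁⟩ ⟨m₂, h₂⟩
    refine ⟨m₁ + m₂, fun x hx s hs => ?_⟩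
    rw [smul_add, smul_add, h₁ x hx s hs, h₂ x hx s hs]

lemma hom_is_smul (q : Ideal R) (hq : q ≠ ⊥) (hqM : q • (⊤ : Submodule R M) = ⊤)
    (h : ↥q →ₗ[R] M) : ∃ m : M, ∀ x (hx : x ∈ q), h ⟨x, hx⟩ = x • m := by
  set K := FractionRing R
  have hinv : (q : FractionalIdeal (nonZeroDivisors R) K) * (q : FractionalIdeal (nonZeroDivisors R) K)⁻¹ = 1 :=
    FractionalIdeal.coe_ideal_mul_inv (K := K) q hq
  have h1 : (1 : K) ∈ (q : FractionalIdeal (nonZeroDivisors R) K) * (q : FractionalIdeal (nonZeroDivisors R) K)⁻¹ := by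
    rw [hinv]; exact (FractionalIdeal.mem_one_iff _).mpr ⟨1, map_one _⟩
  have hP : (∀ x ∈ q, ∃ r, r ∈ q ∧ algebraMap R K r = 1 * algebraMap R K x) ∧
      ∃ m : M, ∀ x (hx : x ∈ q) r (hr : r ∈ q),
        algebraMap R K r = 1 * algebraMap R K x → h ⟨r, hr⟩ = x • m := by
    refine FractionalIdeal.mul_induction_on (C := fun z =>
      (∀ x ∈ q, ∃ r, r ∈ q ∧ algebraMap R K r = z * algebraMap R K x) ∧
      ∃ m : M, ∀ x (hx : x ∈ q) r (hr : r ∈ q),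
        algebraMap R K r = z * algebraMap R K x → h ⟨r, hr⟩ = x • m) h1 ?_ ?_
    · intro α hα β hβ'
      obtain ⟨a, ha, rfl⟩ := (FractionalIdeal.mem_coeIdeal _).mp hα
      have hβ : ∀ c ∈ q, ∃ s : R, algebraMap R K s = β * algebraMap R K c := by
        intro c hc
        have hin : β * algebraMap R K c ∈ (1 : FractionalIdeal (nonZeroDivisors R) K) :=
          (FractionalIdeal.mem_inv_iff (FractionalIdeal.coeIdeal_ne_zero.mpr hq)).mp hβ' _
            ((FractionalIdeal.mem_coeIdeal _).mpr ⟨c, hc, rfl⟩)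
        exact (FractionalIdeal.mem_one_iff _).mp hin
      have hu : h ⟨a, ha⟩ ∈ q • (⊤ : Submodule R M) := by rw [hqM]; trivial
      obtain ⟨m₀, hm₀⟩ := smul_rep_lemma q β hβ (h ⟨a, ha⟩) hu
      constructor
      · intro x hx
        obtain ⟨s, hs⟩ := hβ x hx
        exact ⟨a * s, Ideal.mul_mem_right _ _ ha, by rw [map_mul, hs]; ring⟩
      · refine ⟨m₀, fun x hx r hr hrel => ?_⟩
        obtain ⟨s, hs⟩ := hβ x hx
        have hras : r = s * a := by
          apply IsFractionRing.injective R K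
          rw [map_mul, hrel, hs]; ring
        have hsub : (⟨r, hr⟩ : ↥q) = s • ⟨a, ha⟩ := Subtype.ext (by
          simp only [SetLike.mk_smul_mk, smul_eq_mul, hras])
        rw [hsub, map_smul, hm₀ x hx s hs]
    · rintro z₁ z₂ ⟨he₁, m₁, hm₁⟩ ⟨he₂, m₂, hm₂⟩
      constructor
      · intro x hx
        obtain ⟨r₁, hr₁, e₁⟩ := he₁ x hx
        obtain ⟨r₂, hr₂, e₂⟩ := he₂ x hx
        exact ⟨r₁ + r₂, Ideal.add_mem _ hr₁ hr₂, by rw [map_add, e₁, e₂, add_mul]⟩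
      · refine ⟨m₁ + m₂, fun x hx r hr hrel => ?_⟩
        obtain ⟨r₁, hr₁, e₁⟩ := he₁ x hx
        obtain ⟨r₂, hr₂, e₂⟩ := he₂ x hx
        have hr12 : r = r₁ + r₂ := by
          apply IsFractionRing.injective R K
          rw [map_add, e₁, e₂, hrel, add_mul]
        have hsub : (⟨r, hr⟩ : ↥q) = ⟨r₁, hr₁⟩ + ⟨r₂, hr₂⟩ := Subtype.ext (by simp [hr12])
        rw [hsub, map_add, hm₁ x hx r₁ hr₁ e₁, hm₂ x hx r₂ hr₂ e₂, smul_add]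
  obtain ⟨-, m, hm⟩ := hP
  exact ⟨m, fun x hx => hm x hx x hx (by rw [one_mul])⟩

lemma ext_vanish_of_torsion (p : Ideal R) (hp : p.IsMaximal) (hp0 : p ≠ ⊥)
    (hM : p • (⊤ : Submodule R M) = ⊤)
    (E : Type u) [AddCommGroup E] [Module R E]
    (htor : ∀ e : E, ∃ n : ℕ, ∀ x ∈ p ^ n, x • e = (0 : E)) :
    Ext1Zero R E M := by
  intro X _ _ ι π hι hπ hker
  have hpow : ∀ n : ℕ, (p ^ n) • (⊤ : Submodule R M) = ⊤ := by
    intro n; induction n with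
    | zero => simp
    | succ n ih => rw [pow_succ, ← smul_eq_mul, Submodule.smul_assoc, hM, ih]
  -- Zorn
  set S : Set (Submodule R X) := {Y | Y ⊓ LinearMap.range ι = ⊥} with hS
  have hbot : (⊥ : Submodule R X) ∈ S := by simp [hS]
  have hzorn : ∀ c ⊆ S, IsChain (· ≤ ·) c → ∀ Y ∈ c, ∃ ub ∈ S, ∀ z ∈ c, z ≤ ub := by
    intro c hcS hchain Y hYc
    refine ⟨sSup c, ?_, fun z hz => le_sSup hz⟩
    rw [hS, Set.mem_setOf_eq, eq_bot_iff]
    intro x hx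
    obtain ⟨hx1, hx2⟩ := Submodule.mem_inf.mp hx
    obtain ⟨Z, hZc, hxZ⟩ := (Submodule.mem_sSup_of_directed ⟨Y, hYc⟩ hchain.directedOn).mp hx1
    have hZS : Z ⊓ LinearMap.range ι = ⊥ := hcS hZc
    have : x ∈ Z ⊓ LinearMap.range ι := Submodule.mem_inf.mpr ⟨hxZ, hx2⟩
    rw [hZS] at this; exact this
  obtain ⟨Y₀, -, hmax⟩ := zorn_le_nonempty₀ S hzorn ⊥ hbot
  have hY₀ : Y₀ ⊓ LinearMap.range ι = ⊥ := hmax.prop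
  set πY : ↥Y₀ →ₗ[R] E := π ∘ₗ Y₀.subtype with hπY
  have hπYinj : Function.Injective πY := by
    intro y₁ y₂ hy
    have hmem : (y₁ : X) - y₂ ∈ Y₀ ⊓ LinearMap.range ι := by
      refine Submodule.mem_inf.mpr ⟨sub_mem y₁.2 y₂.2, ?_⟩
      rw [hker, LinearMap.mem_ker, map_sub, sub_eq_zero]
      exact hy
    rw [hY₀] at hmem
    exact Subtype.ext (sub_eq_zero.mp hmem)
  have hrange : LinearMap.range πY = Submodule.map π Y₀ := by
    rw [hπY, LinearMap.range_comp, Submodule.range_subtype]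
  -- the image is everything
  have himage : Submodule.map π Y₀ = ⊤ := by
    by_contra hne
    obtain ⟨e, -, he⟩ := SetLike.exists_of_lt (lt_top_iff_ne_top.mpr hne : Submodule.map π Y₀ < ⊤)
    set N := Submodule.map π Y₀ with hN
    set I : Ideal R := Submodule.comap (LinearMap.toSpanSingleton R E e) N with hIdef
    obtain ⟨n, hn⟩ := htor e
    have hpnI : p ^ n ≤ I := by
      intro x hx
      rw [hIdef, Submodule.mem_comap, LinearMap.toSpanSingleton_apply, hn x hx]
      exact N.zero_mem
    have hI0 : I ≠ ⊥ := by
      intro h0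
      have hb : p ^ n = ⊥ := le_bot_iff.mp (h0 ▸ hpnI)
      exact pow_ne_zero n hp0 hb
    have hIM : I • (⊤ : Submodule R M) = ⊤ := by
      have hle2 : (⊤ : Submodule R M) ≤ I • ⊤ := by
        conv_lhs => rw [← hpow n]
        exact Submodule.smul_mono hpnI le_rfl
      exact top_le_iff.mp hle2
    obtain ⟨x₀, hx₀⟩ := hπ e
    -- inverse of πY onto N
    set eN : ↥Y₀ ≃ₗ[R] ↥N :=
      (LinearEquiv.ofInjective πY hπYinj).trans (LinearEquiv.ofEq _ _ hrange) with heN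
    have heNval : ∀ y : ↥Y₀, ((eN y : E)) = πY y := fun y => rfl
    have hsN : ∀ z : ↥N, πY (eN.symm z) = (z : E) := by
      intro z
      exact congrArg (fun w : ↥N => (w : E)) (eN.apply_symm_apply z)
    set g1 : ↥I →ₗ[R] X := Y₀.subtype ∘ₗ (eN.symm : ↥N →ₗ[R] ↥Y₀) ∘ₗ
      (LinearMap.codRestrict N ((LinearMap.toSpanSingleton R E e) ∘ₗ I.subtype)
        (fun r => Submodule.mem_comap.mp r.2)) with hg1
    have hg1Y : ∀ r : ↥I, g1 r ∈ Y₀ := fun r => (eN.symm _).2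
    have hg1π : ∀ r : ↥I, π (g1 r) = (r : R) • e := by
      intro r
      have := hsN ⟨(r : R) • e, Submodule.mem_comap.mp r.2⟩
      exact this
    set d : ↥I →ₗ[R] X := g1 - (LinearMap.toSpanSingleton R X x₀) ∘ₗ I.subtype with hd
    have hdmem : ∀ r : ↥I, d r ∈ LinearMap.range ι := by
      intro r
      rw [hker, LinearMap.mem_ker]
      simp only [hd, LinearMap.sub_apply, LinearMap.comp_apply,
        LinearMap.toSpanSingleton_apply, map_sub, map_smul, hg1π r, hx₀,
        Submodule.coe_subtype, sub_self]
    set ιe : M ≃ₗ[R] ↥(LinearMap.range ι) := LinearEquiv.ofInjective ι hι with hιe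
    have hιeval : ∀ m : M, ((ιe m : X)) = ι m := fun m => rfl
    have hιinv : ∀ z : ↥(LinearMap.range ι), ι (ιe.symm z) = (z : X) := by
      intro z
      exact congrArg (fun w : ↥(LinearMap.range ι) => (w : X)) (ιe.apply_symm_apply z)
    set hmap : ↥I →ₗ[R] M := (ιe.symm : ↥(LinearMap.range ι) →ₗ[R] M) ∘ₗ
      LinearMap.codRestrict (LinearMap.range ι) d hdmem with hhmap
    have hmapval : ∀ r : ↥I, ι (hmap r) = d r := by
      intro r
      rw [hhmap]
      exact hιinv ⟨d r, hdmem r⟩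
    obtain ⟨m, hm⟩ := hom_is_smul I hI0 hIM hmap
    set y : X := x₀ + ι m with hy
    have hπy : π y = e := by
      have : π (ι m) = 0 := by
        rw [← LinearMap.mem_ker, ← hker]; exact LinearMap.mem_range_self ι m
      rw [hy, map_add, hx₀, this, add_zero]
    have hry : ∀ r (hr : r ∈ I), r • y ∈ Y₀ := by
      intro r hr
      have h1 : r • y = r • x₀ + ι (r • m) := by rw [hy, smul_add, map_smul]
      have h2 : ι (r • m) = ι (hmap ⟨r, hr⟩) := by rw [hm r hr]
      have h3 : ι (hmap ⟨r, hr⟩) = d ⟨r, hr⟩ := hmapval ⟨r, hr⟩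
      have h4 : d ⟨r, hr⟩ = g1 ⟨r, hr⟩ - r • x₀ := by
        simp [hd, LinearMap.toSpanSingleton_apply]
      rw [h1, h2, h3, h4]
      have : r • x₀ + (g1 ⟨r, hr⟩ - r • x₀) = g1 ⟨r, hr⟩ := by abel
      rw [this]
      exact hg1Y ⟨r, hr⟩
    set Y' : Submodule R X := Y₀ ⊔ Submodule.span R {y} with hY'
    have hY'S : Y' ∈ S := by
      rw [hS, Set.mem_setOf_eq, eq_bot_iff]
      intro x hx
      obtain ⟨hx1, hx2⟩ := Submodule.mem_inf.mp hx
      obtain ⟨w, hw, v, hv, rfl⟩ := Submodule.mem_sup.mp hx1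
      obtain ⟨r, rfl⟩ := Submodule.mem_span_singleton.mp hv
      have hπ0 : π (w + r • y) = 0 := by
        rw [← LinearMap.mem_ker, ← hker]; exact hx2
      have hre : r • e = -(π w) := by
        rw [map_add, map_smul, hπy] at hπ0
        exact eq_neg_of_add_eq_zero_right hπ0
      have hrI : r ∈ I := by
        rw [hIdef, Submodule.mem_comap, LinearMap.toSpanSingleton_apply, hre]
        exact neg_mem (Submodule.mem_map_of_mem hw)
      have hxY₀ : w + r • y ∈ Y₀ := add_mem hw (hry r hrI)
      have : w + r • y ∈ Y₀ ⊓ LinearMap.range ι := Submodule.mem_inf.mpr ⟨hxY₀, hx2⟩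
      rw [hY₀] at this; exact this
    have hle : Y' ≤ Y₀ := hmax.2 hY'S le_sup_left
    have hyY₀ : y ∈ Y₀ :=
      hle (Submodule.mem_sup_right (Submodule.mem_span_singleton_self y))
    exact he ⟨y, hyY₀, hπy⟩
  have hsurj : Function.Surjective πY := by
    rw [← LinearMap.range_eq_top, hrange, himage]
  set eFull : ↥Y₀ ≃ₗ[R] E := LinearEquiv.ofBijective πY ⟨hπYinj, hsurj⟩ with heFull
  refine ⟨Y₀.subtype ∘ₗ (eFull.symm : E →ₗ[R] ↥Y₀), ?_⟩
  apply LinearMap.ext; intro z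
  show π (Y₀.subtype (eFull.symm z)) = z
  have h1 : πY (eFull.symm z) = z := by
    have h2 := eFull.apply_symm_apply z
    exact h2
  exact h1

lemma hull_torsion (p : Ideal R) (hp : p.IsMaximal) (hp0 : p ≠ ⊥)
    (E : Type u) [AddCommGroup E] [Module R E] (j : (R ⧸ p) →ₗ[R] E)
    (hess : ∀ N : Submodule R E, N ⊓ LinearMap.range j = ⊥ → N = ⊥) (e : E) :
    ∃ n : ℕ, ∀ x ∈ p ^ n, x • e = (0 : E) := by
  by_cases he : e = 0
  · exact ⟨0, fun x _ => by rw [he, smul_zero]⟩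
  have hkill : ∀ z ∈ LinearMap.range j, ∀ x ∈ p, x • z = (0 : E) := by
    rintro z ⟨w, rfl⟩ x hx
    obtain ⟨w', rfl⟩ := Submodule.Quotient.mk_surjective p w
    rw [← map_smul]
    have hz : x • (Submodule.Quotient.mk w' : R ⧸ p) = 0 := by
      rw [← Submodule.Quotient.mk_smul, Submodule.Quotient.mk_eq_zero]
      rw [smul_eq_mul]
      exact Ideal.mul_mem_right w' p hx
    rw [hz, map_zero]
  set I : Ideal R := LinearMap.ker (LinearMap.toSpanSingleton R E e) with hIdef
  have hIe : ∀ x ∈ I, x • e = (0 : E) := by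
    intro x hx
    have := (LinearMap.mem_ker).mp hx
    rwa [LinearMap.toSpanSingleton_apply] at this
  have hIne : I ≠ ⊥ := by
    have h1 : Submodule.span R {e} ⊓ LinearMap.range j ≠ ⊥ := by
      intro hb
      have := hess _ hb
      rw [Submodule.span_singleton_eq_bot] at this
      exact he this
    obtain ⟨z, hz, hz0⟩ := Submodule.exists_mem_ne_zero_of_ne_bot h1
    obtain ⟨hz1, hz2⟩ := Submodule.mem_inf.mp hz
    obtain ⟨r, rfl⟩ := Submodule.mem_span_singleton.mp hz1
    obtain ⟨v, hv, hv0⟩ := Submodule.exists_mem_ne_zero_of_ne_bot hp0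
    have hr0 : r ≠ 0 := fun h => hz0 (by rw [h, zero_smul])
    intro hbot
    have hvr : v * r ∈ I := by
      rw [hIdef, LinearMap.mem_ker, LinearMap.toSpanSingleton_apply, mul_smul]
      exact hkill _ hz2 v hv
    rw [hbot] at hvr
    exact mul_ne_zero hv0 hr0 (Submodule.mem_bot R |>.mp hvr)
  have hprime : Prime p := Ideal.prime_of_isPrime hp0 hp.isPrime
  obtain ⟨n, J, hJ, hIJ⟩ := WfDvdMonoid.max_power_factor hIne hprime.irreducible
  refine ⟨n, fun x hx => ?_⟩
  have hS : (p ^ n • Submodule.span R {e} : Submodule R E) ⊓ LinearMap.range j = ⊥ := by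
    rw [eq_bot_iff]
    intro z hz
    obtain ⟨hz1, hz2⟩ := Submodule.mem_inf.mp hz
    have hJkill : ∀ y ∈ J, y • z = (0 : E) := by
      refine Submodule.smul_induction_on hz1 ?_ ?_
      · intro r hr w hw y hy
        obtain ⟨c, rfl⟩ := Submodule.mem_span_singleton.mp hw
        have hyr : y * r ∈ I := by
          rw [hIJ, mul_comm (p ^ n) J]
          exact Ideal.mul_mem_mul hy hr
        calc y • r • c • e = (y * r * c) • e := by rw [smul_smul, smul_smul]
          _ = (c * (y * r)) • e := by rw [show y * r * c = c * (y * r) by ring]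
          _ = c • ((y * r) • e) := mul_smul _ _ _
          _ = 0 := by rw [hIe _ hyr, smul_zero]
      · intro z₁ z₂ h₁ h₂ y hy
        rw [smul_add, h₁ y hy, h₂ y hy, add_zero]
    have hJp : ¬ J ≤ p := fun hle => hJ ((Ideal.dvd_iff_le).mpr hle)
    obtain ⟨y, hyJ, hyp⟩ := SetLike.not_le_iff_exists.mp hJp
    obtain ⟨u, i, hi, hui⟩ := hp.exists_inv hyp
    have : z = (u * y + i) • z := by rw [hui, one_smul]
    rw [this, add_smul, mul_smul, hJkill y hyJ, smul_zero, zero_add,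
      hkill z hz2 i hi]
    exact Submodule.zero_mem ⊥
  have hSbot := hess _ hS
  have hxe : x • e ∈ (p ^ n • Submodule.span R {e} : Submodule R E) :=
    Submodule.smul_mem_smul hx (Submodule.mem_span_singleton_self e)
  rw [hSbot] at hxe
  exact (Submodule.mem_bot R).mp hxe

lemma divisible_of_ext (p : Ideal R) (hp : p.IsMaximal) (hp0 : p ≠ ⊥)
    (hext : Ext1Zero R (R ⧸ p) M) : p • (⊤ : Submodule R M) = ⊤ := by
  by_contra hne
  obtain ⟨m₀, -, hm₀⟩ := SetLike.exists_of_lt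
    (lt_top_iff_ne_top.mpr hne : p • (⊤ : Submodule R M) < ⊤)
  set K := FractionRing R
  -- an element of p ∖ p²
  have hlt : p ^ 2 < p := Ideal.pow_lt_self p hp0 hp.ne_top 2 le_rfl
  obtain ⟨a, hap, hap2⟩ := SetLike.exists_of_lt hlt
  -- a suitable element w of p⁻¹ with a·w ∉ p
  have hwex : ∃ w ∈ ((p : FractionalIdeal (nonZeroDivisors R) K)⁻¹),
      ∀ t : R, algebraMap R K t = w * algebraMap R K a → t ∉ p := by
    by_contra hcon
    push_neg at hcon
    have hsub : FractionalIdeal.spanSingleton (nonZeroDivisors R) (algebraMap R K a) *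
        (p : FractionalIdeal (nonZeroDivisors R) K)⁻¹ ≤
          (p : FractionalIdeal (nonZeroDivisors R) K) := by
      rw [FractionalIdeal.mul_le]
      intro i hi w hw
      obtain ⟨z, rfl⟩ := (FractionalIdeal.mem_spanSingleton _).mp hi
      -- a * w has a preimage since w ∈ p⁻¹ and a ∈ p
      have hin : w * algebraMap R K a ∈ (1 : FractionalIdeal (nonZeroDivisors R) K) :=
        (FractionalIdeal.mem_inv_iff (FractionalIdeal.coeIdeal_ne_zero.mpr hp0)).mp hw _
          ((FractionalIdeal.mem_coeIdeal _).mpr ⟨a, hap, rfl⟩)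
      obtain ⟨t, ht⟩ := (FractionalIdeal.mem_one_iff _).mp hin
      obtain ⟨t', ht', htp⟩ := hcon w hw
      have heq : (z • algebraMap R K a) * w = algebraMap R K (z * t') := by
        rw [Algebra.smul_def, map_mul, ht']; ring
      rw [heq]
      exact (FractionalIdeal.mem_coeIdeal _).mpr ⟨z * t', Ideal.mul_mem_left _ z htp, rfl⟩
    have h2 : FractionalIdeal.spanSingleton (nonZeroDivisors R) (algebraMap R K a) ≤
        ((p ^ 2 : Ideal R) : FractionalIdeal (nonZeroDivisors R) K) := by
      have hmul := mul_left_mono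
        (a := (p : FractionalIdeal (nonZeroDivisors R) K)) hsub
      dsimp only at hmul
      rw [mul_assoc, mul_comm ((p : FractionalIdeal (nonZeroDivisors R) K))⁻¹,
        FractionalIdeal.coe_ideal_mul_inv (K := K) p hp0, mul_one] at hmul
      rwa [pow_two, FractionalIdeal.coeIdeal_mul]
    have ha2 : a ∈ p ^ 2 := by
      have := h2 ((FractionalIdeal.mem_spanSingleton _).mpr ⟨1, one_smul _ _⟩)
      obtain ⟨a', ha', haa⟩ := (FractionalIdeal.mem_coeIdeal _).mp this
      rwa [IsFractionRing.injective R K haa] at ha'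
    exact hap2 ha2
  obtain ⟨w, hwinv, hwt⟩ := hwex
  -- the coefficient function
  have hts : ∀ x : ↥p, ∃ t : R, algebraMap R K t = w * algebraMap R K (x : R) := by
    intro x
    have hin : w * algebraMap R K (x : R) ∈ (1 : FractionalIdeal (nonZeroDivisors R) K) :=
      (FractionalIdeal.mem_inv_iff (FractionalIdeal.coeIdeal_ne_zero.mpr hp0)).mp hwinv _
        ((FractionalIdeal.mem_coeIdeal _).mpr ⟨x.1, x.2, rfl⟩)
    exact (FractionalIdeal.mem_one_iff _).mp hin
  choose t htfun using hts
  have hinj := IsFractionRing.injective R K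
  set φ : ↥p →ₗ[R] R :=
    { toFun := t
      map_add' := fun x y => by
        apply hinj
        rw [map_add, htfun, htfun, htfun, Submodule.coe_add, map_add, mul_add]
      map_smul' := fun r x => by
        apply hinj
        rw [RingHom.id_apply, smul_eq_mul, map_mul, htfun, htfun,
          SetLike.val_smul, smul_eq_mul, map_mul]
        ring } with hφ
  set f : ↥p →ₗ[R] M := φ.smulRight m₀ with hf
  have hfval : ∀ x : ↥p, f x = t x • m₀ := fun x => rfl
  set ta : R := t ⟨a, hap⟩ with hta
  have htap : ta ∉ p := hwt ta (htfun ⟨a, hap⟩)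
  -- the extension
  set g : ↥p →ₗ[R] M × R := LinearMap.prod (-f) (Submodule.subtype p) with hg
  set G : Submodule R (M × R) := LinearMap.range g with hG
  set ι : M →ₗ[R] (M × R) ⧸ G := G.mkQ ∘ₗ LinearMap.inl R M R with hι
  have hleker : G ≤ LinearMap.ker (p.mkQ ∘ₗ LinearMap.snd R M R) := by
    rintro _ ⟨x, rfl⟩
    rw [LinearMap.mem_ker, LinearMap.comp_apply]
    have h2 : (LinearMap.snd R M R) (g x) = (x : R) := rfl
    rw [h2, Submodule.mkQ_apply, Submodule.Quotient.mk_eq_zero]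
    exact x.2
  set πX : ((M × R) ⧸ G) →ₗ[R] R ⧸ p := Submodule.liftQ G (p.mkQ ∘ₗ LinearMap.snd R M R) hleker
    with hπX
  have hιinj : Function.Injective ι := by
    intro m₁ m₂ hmm
    have hmem : ((m₁ - m₂, 0) : M × R) ∈ G := by
      have := (Submodule.Quotient.eq G).mp hmm
      simpa using this
    obtain ⟨x, hx⟩ := hmem
    have hx2 : (x : R) = 0 := congrArg Prod.snd hx
    have hx0 : x = 0 := Subtype.ext hx2
    rw [hx0, map_zero] at hx
    have := congrArg Prod.fst hx
    simp only [Prod.fst_zero] at this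
    exact sub_eq_zero.mp this.symm
  have hπsurj : Function.Surjective πX := by
    intro z
    obtain ⟨r, rfl⟩ := Submodule.Quotient.mk_surjective p z
    exact ⟨Submodule.Quotient.mk (0, r), by rw [hπX]; rfl⟩
  have hkerπ : LinearMap.range ι = LinearMap.ker πX := by
    apply le_antisymm
    · rintro _ ⟨m', rfl⟩
      rw [LinearMap.mem_ker, hι, LinearMap.comp_apply, hπX]
      have : πX (G.mkQ (LinearMap.inl R M R m')) = p.mkQ 0 := rfl
      simpa using this
    · intro z hz
      obtain ⟨⟨m, r⟩, rfl⟩ := Submodule.Quotient.mk_surjective G z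
      have hr : r ∈ p := by
        rw [LinearMap.mem_ker] at hz
        have : p.mkQ r = 0 := hz
        rwa [Submodule.mkQ_apply, Submodule.Quotient.mk_eq_zero] at this
      refine ⟨m + f ⟨r, hr⟩, ?_⟩
      rw [hι, LinearMap.comp_apply, Submodule.mkQ_apply]
      rw [Submodule.Quotient.eq]
      refine ⟨-⟨r, hr⟩, ?_⟩
      have : g (-⟨r, hr⟩) = (f ⟨r, hr⟩, -r) := by
        simp [hg, LinearMap.prod_apply]
      rw [this]
      simp [Prod.ext_iff]
  -- apply the Ext hypothesis
  obtain ⟨s, hs⟩ := hext ((M × R) ⧸ G) ι πX hιinj hπsurj hkerπ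
  obtain ⟨⟨m₁, r₁⟩, hz₁⟩ := Submodule.Quotient.mk_surjective G (s (p.mkQ 1))
  have hr₁ : p.mkQ r₁ = p.mkQ 1 := by
    have h1 := LinearMap.ext_iff.mp hs (p.mkQ 1)
    rw [LinearMap.comp_apply, LinearMap.id_apply] at h1
    rw [← h1, ← hz₁, hπX]
    rfl
  have hv : (1 : R) - r₁ ∈ p := by
    rw [← Submodule.Quotient.mk_eq_zero p, ← Submodule.mkQ_apply, map_sub, hr₁, sub_self]
  have ha0 : a • s (p.mkQ 1) = 0 := by
    rw [← map_smul]
    have : a • (p.mkQ 1) = p.mkQ a := by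
      rw [← map_smul, smul_eq_mul, mul_one]
    rw [this]
    have : p.mkQ a = 0 := by rw [Submodule.mkQ_apply, Submodule.Quotient.mk_eq_zero]; exact hap
    rw [this, map_zero]
  have hmemG : ((a • m₁, a * r₁) : M × R) ∈ G := by
    rw [← hz₁] at ha0
    have : a • (Submodule.Quotient.mk (m₁, r₁) : (M × R) ⧸ G) =
        Submodule.Quotient.mk (a • m₁, a * r₁) := by
      rw [← Submodule.Quotient.mk_smul]
      rfl
    rw [this, Submodule.Quotient.mk_eq_zero] at ha0
    exact ha0
  obtain ⟨x, hx⟩ := hmemG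
  have hxval : (x : R) = a * r₁ := congrArg Prod.snd hx
  have hxmem : a * r₁ ∈ p := hxval ▸ x.2
  have hxeq : x = (⟨a * r₁, hxmem⟩ : ↥p) := Subtype.ext hxval
  have hfst : -(f x) = a • m₁ := congrArg Prod.fst hx
  have har : (⟨a * r₁, hxmem⟩ : ↥p) = r₁ • (⟨a, hap⟩ : ↥p) := Subtype.ext (by
    simp [smul_eq_mul, mul_comm])
  have hkey : r₁ • (ta • m₀) = -(a • m₁) := by
    rw [← hfst, hxeq, har, map_smul, hfval, neg_neg, ← hta]
  -- conclude ta • m₀ ∈ p • ⊤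
  have hmem1 : ta • m₀ ∈ p • (⊤ : Submodule R M) := by
    have heq2 : ta • m₀ = -(a • m₁) + ((1 : R) - r₁) • (ta • m₀) := by
      rw [← hkey, ← add_smul, show r₁ + ((1 : R) - r₁) = 1 by ring, one_smul]
    rw [heq2]
    exact Submodule.add_mem _ (neg_mem (Submodule.smul_mem_smul hap Submodule.mem_top))
      (Submodule.smul_mem_smul hv Submodule.mem_top)
  -- conclude m₀ ∈ p • ⊤
  obtain ⟨u, i, hi, hui⟩ := hp.exists_inv htap
  have : m₀ ∈ p • (⊤ : Submodule R M) := by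
    have hm : m₀ = (u * ta + i) • m₀ := by rw [hui, one_smul]
    rw [hm, add_smul, mul_smul]
    exact Submodule.add_mem _ (Submodule.smul_mem _ u hmem1)
      (Submodule.smul_mem_smul hi Submodule.mem_top)
  exact hm₀ this

end Aux

/-- Over a Dedekind domain `R` with nonzero maximal ideal `p`:
`Ext¹_R(R/p, M) = 0` iff `Mp = M`, and in that case `Ext¹_R(E(R/p), M) = 0` for
any injective hull `E(R/p)` of `R/p`. -/
theorem dedekind_ext_injective_hull (R : Type u) [CommRing R] [IsDedekindDomain R]
    (p : Ideal R) (hp : p.IsMaximal) (hp0 : p ≠ ⊥)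
    (M : Type u) [AddCommGroup M] [Module R M] :
    (Ext1Zero R (R ⧸ p) M ↔ p • (⊤ : Submodule R M) = ⊤) ∧
    (Ext1Zero R (R ⧸ p) M →
      ∀ (E : Type u) [AddCommGroup E] [Module R E] (j : (R ⧸ p) →ₗ[R] E),
        Module.Injective R E → Function.Injective j →
          (∀ N : Submodule R E, N ⊓ LinearMap.range j = ⊥ → N = ⊥) →
            Ext1Zero R E M) := by
  have hiff : Ext1Zero R (R ⧸ p) M ↔ p • (⊤ : Submodule R M) = ⊤ := by
    constructor
    · exact divisible_of_ext p hp hp0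
    · intro hM
      refine ext_vanish_of_torsion p hp hp0 hM (R ⧸ p) ?_
      intro e
      refine ⟨1, fun x hx => ?_⟩
      rw [pow_one] at hx
      obtain ⟨r, rfl⟩ := Submodule.Quotient.mk_surjective p e
      rw [← Submodule.Quotient.mk_smul, Submodule.Quotient.mk_eq_zero, smul_eq_mul]
      exact Ideal.mul_mem_right r p hx
  refine ⟨hiff, ?_⟩
  intro hext E _ _ j _ _ hess
  exact ext_vanish_of_torsion p hp hp0 (hiff.mp hext) E (hull_torsion p hp hp0 E j hess)
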